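/- If X is a Baire topological space with a countable pseudobase, then the countable power X^ω (with the product topology) is a Baire space. -/

import Mathlib

open Set Topology

section Aux

variable {X : Type*} [TopologicalSpace X]

/-- Prepend an element to an infinite sequence. -/
private def cns (x : X) (z : ℕ → X) : ℕ → X
  | 0 => x
  | n + 1 => z n

/-- Prepend a finite list to an infinite sequence. -/
private def app (p : List X) (z : ℕ → X) : ℕ → X :=
  fun n => if h : n < p.length then p[n] else z (n - p.length)

private lemma app_nil (z : ℕ → X) : app ([] : List X) z = z := by
  funext n; simp [app]

private lemma app_concat (p : List X) (x : X) (z : ℕ → X) :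
    app (p ++ [x]) z = app p (cns x z) := by
  funext n
  rcases lt_trichotomy n p.length with h | h | h
  · have h1 : n < (p ++ [x]).length := by
      simp only [List.length_append, List.length_singleton]; omega
    simp only [app, dif_pos h, dif_pos h1]
    exact List.getElem_append_left h
  · subst h
    have h1 : p.length < (p ++ [x]).length := by
      simp only [List.length_append, List.length_singleton]; omega
    simp only [app, dif_pos h1, dif_neg (lt_irrefl p.length), Nat.sub_self]
    exact List.getElem_concat_length rfl _
  · have h1 : ¬ n < (p ++ [x]).length := by
      simp only [not_lt, List.length_append, List.length_singleton]; omega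
    have h2 : ¬ n < p.length := by omega
    simp only [app, dif_neg h1, dif_neg h2]
    obtain ⟨k, hk⟩ : ∃ k, n - p.length = k + 1 := ⟨n - p.length - 1, by omega⟩
    rw [hk]
    show z (n - (p ++ [x]).length) = z k
    congr 1
    simp only [List.length_append, List.length_singleton]
    omega

private lemma cns_self (w : ℕ → X) : cns (w 0) (fun k => w (k + 1)) = w := by
  funext n; cases n <;> rfl

private lemma cont_cns_left (x : X) : Continuous fun z : ℕ → X => cns x z := by
  apply continuous_pi
  rintro (_ | n)
  · exact continuous_const
  · exact continuous_apply n

private lemma cont_cns_right (z : ℕ → X) : Continuous fun x : X => cns x z := by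
  apply continuous_pi
  rintro (_ | n)
  · exact continuous_id
  · exact continuous_const

private lemma cont_app (p : List X) : Continuous fun z : ℕ → X => app p z := by
  apply continuous_pi
  intro n
  by_cases h : n < p.length
  · simp only [app, dif_pos h]; exact continuous_const
  · simp only [app, dif_neg h]; exact continuous_apply _

private lemma cont_tl : Continuous fun z : ℕ → X => (fun k => z (k + 1)) :=
  continuous_pi fun k => continuous_apply (k + 1)

/-- Finite "box" in the product, with sides indexed into the pseudobase enumeration `e`. -/
private def box (e : ℕ → Set X) (L : List ℕ) : Set (ℕ → X) :=
  {z | ∀ i, (h : i < L.length) → z i ∈ e L[i]}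

/-- The "extension" set: points `x` at which the section of `H` hits the box `L`. -/
private def extn (e : ℕ → Set X) (H : Set (ℕ → X)) (L : List ℕ) : Set X :=
  {x | ∃ z ∈ box e L, cns x z ∈ H}

variable {e : ℕ → Set X}

private lemma box_isOpen (he : ∀ k, IsOpen (e k)) (L : List ℕ) : IsOpen (box e L) := by
  have : box e L = ⋂ i : Fin L.length, (fun z : ℕ → X => z i.1) ⁻¹' e L[i.1] := by
    ext z
    simp only [box, mem_setOf_eq, mem_iInter, mem_preimage]
    exact ⟨fun h i => h i.1 i.2, fun h i hi => h ⟨i, hi⟩⟩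
  rw [this]
  exact isOpen_iInter_of_finite fun i => (he _).preimage (continuous_apply _)

private lemma box_nonempty (hne : ∀ k, (e k).Nonempty) (x₀ : X) (L : List ℕ) :
    (box e L).Nonempty := by
  refine ⟨fun i => if h : i < L.length then (hne L[i]).choose else x₀, fun i h => ?_⟩
  simp only [dif_pos h]
  exact (hne _).choose_spec

private lemma extn_isOpen {H : Set (ℕ → X)} (hH : IsOpen H) (L : List ℕ) :
    IsOpen (extn e H L) := by
  have : extn e H L = ⋃ z ∈ box e L, (fun x => cns x z) ⁻¹' H := by
    ext x; simp [extn]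
  rw [this]
  exact isOpen_biUnion fun z _ => hH.preimage (cont_cns_right z)

private lemma extn_dense (he : ∀ k, IsOpen (e k)) (hne : ∀ k, (e k).Nonempty) (x₀ : X)
    {H : Set (ℕ → X)} (hd : Dense H) (L : List ℕ) : Dense (extn e H L) := by
  rw [dense_iff_inter_open]
  intro U hU hUne
  obtain ⟨u, hu⟩ := hUne
  set P : Set (ℕ → X) :=
    (fun w : ℕ → X => w 0) ⁻¹' U ∩ (fun w : ℕ → X => fun k => w (k + 1)) ⁻¹' box e L with hP
  have hPo : IsOpen P :=
    (hU.preimage (continuous_apply 0)).inter ((box_isOpen he L).preimage cont_tl)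
  obtain ⟨z, hz⟩ := box_nonempty hne x₀ L
  have hPne : P.Nonempty := by
    refine ⟨cns u z, hu, ?_⟩
    show (fun k => cns u z (k + 1)) ∈ box e L
    exact hz
  obtain ⟨w, hwP, hwH⟩ := hd.inter_open_nonempty P hPo hPne
  refine ⟨w 0, hwP.1, (fun k => w (k + 1)), hwP.2, ?_⟩
  rw [cns_self]
  exact hwH

/-- Every nonempty open set in the product contains a box. -/
private lemma exists_box (he_sub : ∀ U : Set X, IsOpen U → U.Nonempty → ∃ k, e k ⊆ U)
    {U : Set (ℕ → X)} (hU : IsOpen U) (hne : U.Nonempty) : ∃ L, box e L ⊆ U := by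
  obtain ⟨y, hy⟩ := hne
  obtain ⟨I, u, h1, h2⟩ := isOpen_pi_iff.1 hU y hy
  have hex : ∀ i : ℕ, ∃ k, i ∈ I → e k ⊆ u i := by
    intro i
    by_cases hi : i ∈ I
    · obtain ⟨k, hk⟩ := he_sub (u i) (h1 i hi).1 ⟨y i, (h1 i hi).2⟩
      exact ⟨k, fun _ => hk⟩
    · exact ⟨0, fun h => absurd h hi⟩
  choose c hc using hex
  set m : ℕ := I.sup id + 1 with hm
  refine ⟨(List.range m).map c, fun z hz => h2 ?_⟩
  intro i hi
  have him : i < m := by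
    have := Finset.le_sup (f := id) hi
    simp only [id] at this; omega
  have hzi := hz i (by simpa using him)
  rw [List.getElem_map, List.getElem_range] at hzi
  exact hc i hi hzi

end Aux

/-- If `X` is a Baire space with a countable pseudobase, then `X^ω` is Baire. -/
theorem baire_countable_power {X : Type*} [TopologicalSpace X] [BaireSpace X]
    (hpb : ∃ B : Set (Set X), B.Countable ∧
      (∀ b ∈ B, IsOpen b ∧ b.Nonempty) ∧
      ∀ U : Set X, IsOpen U → U.Nonempty → ∃ b ∈ B, b ⊆ U) :
    BaireSpace (ℕ → X) := by
  refine ⟨fun f hfo hfd => ?_⟩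
  rcases isEmpty_or_nonempty X with hX | hX
  · intro y
    exact (hX.false (y 0)).elim
  obtain ⟨x₀⟩ := hX
  have hNE : Nonempty (ℕ → X) := ⟨fun _ => x₀⟩
  obtain ⟨B, hBc, hBo, hBsub⟩ := hpb
  obtain ⟨b, hb, -⟩ := hBsub univ isOpen_univ ⟨x₀, trivial⟩
  obtain ⟨e, rfl⟩ := hBc.exists_eq_range ⟨b, hb⟩
  have he_o : ∀ k, IsOpen (e k) := fun k => (hBo (e k) ⟨k, rfl⟩).1
  have he_ne : ∀ k, (e k).Nonempty := fun k => (hBo (e k) ⟨k, rfl⟩).2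
  have he_sub : ∀ U : Set X, IsOpen U → U.Nonempty → ∃ k, e k ⊆ U := by
    intro U hU hn
    obtain ⟨b', ⟨k, rfl⟩, hbU⟩ := hBsub U hU hn
    exact ⟨k, hbU⟩
  -- sections
  set sect : List X → Set (ℕ → X) → Set (ℕ → X) := fun p H => app p ⁻¹' H with hsect
  have sect_nil : ∀ H : Set (ℕ → X), sect [] H = H := by
    intro H; ext z; simp [hsect, app_nil]
  have sect_concat : ∀ (p : List X) (x : X) (H : Set (ℕ → X)),
      sect (p ++ [x]) H = cns x ⁻¹' sect p H := by
    intro p x H; ext z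
    simp [hsect, mem_preimage, app_concat]
  have sect_open : ∀ (p : List X) (H : Set (ℕ → X)), IsOpen H → IsOpen (sect p H) :=
    fun p H hH => hH.preimage (cont_app p)
  -- the invariant
  set Inv : List X → Prop := fun p => ∀ n, Dense (sect p (f n)) with hInvDef
  -- one-coordinate generic extension step
  have stepX : ∀ (p : List X), Inv p → ∀ c : Set X, IsOpen c → c.Nonempty →
      ∃ x ∈ c, Inv (p ++ [x]) := by
    intro p hp c hc hcne
    have hdense : Dense (⋂ q : ℕ × List ℕ, extn e (sect p (f q.1)) q.2) := by
      apply dense_iInter_of_isOpen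
      · exact fun q => extn_isOpen (sect_open p (f q.1) (hfo q.1)) q.2
      · exact fun q => extn_dense he_o he_ne x₀ (hp q.1) q.2
    obtain ⟨x, hxc, hxg⟩ := hdense.inter_open_nonempty c hc hcne
    refine ⟨x, hxc, fun n => ?_⟩
    rw [sect_concat]
    rw [dense_iff_inter_open]
    intro U hU hUne
    obtain ⟨L, hL⟩ := exists_box he_sub hU hUne
    have hxA : x ∈ extn e (sect p (f n)) L := by
      have := mem_iInter.1 hxg (n, L)
      exact this
    obtain ⟨z, hz, hzH⟩ := hxA
    exact ⟨z, hL hz, hzH⟩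
  -- block extension along a list of pseudobase indices
  have block : ∀ (L : List ℕ) (p : List X), Inv p →
      ∃ q : List X, q.length = L.length ∧ Inv (p ++ q) ∧
        ∀ i (hL : i < L.length) (hq : i < q.length), q[i] ∈ e (L[i]'hL) := by
    intro L
    induction L with
    | nil =>
      intro p hp
      exact ⟨[], rfl, by simpa using hp, fun i hL _ => absurd hL (by simp)⟩
    | cons k L ih =>
      intro p hp
      obtain ⟨x, hxk, hInv'⟩ := stepX p hp (e k) (he_o k) (he_ne k)
      obtain ⟨q, hlen, hInv'', hget⟩ := ih (p ++ [x]) hInv'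
      refine ⟨x :: q, by simp [hlen], by rwa [List.append_cons], ?_⟩
      rintro (_ | i) hL hq
      · simpa using hxk
      · simp only [List.getElem_cons_succ]
        exact hget i (by simpa using hL) (by simpa using hq)
  -- key membership lemma
  have key : ∀ (H : Set (ℕ → X)) (p q : List X) (L : List ℕ),
      box e L ⊆ sect p H → q.length = L.length →
      (∀ i (hL : i < L.length) (hq : i < q.length), q[i] ∈ e (L[i]'hL)) →
      ∀ z : ℕ → X, (∀ i (h : i < (p ++ q).length), z i = (p ++ q)[i]) → z ∈ H := by
    intro H p q L hbox hlen hget z hmatch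
    have hz : z = app p (fun j => z (p.length + j)) := by
      funext n
      unfold app
      split
      · rename_i h
        rw [hmatch n (by simp only [List.length_append]; omega)]
        exact List.getElem_append_left h
      · congr 1; omega
    have hmem : (fun j => z (p.length + j)) ∈ box e L := by
      intro i hi
      have hi' : i < q.length := by omega
      have h1 : p.length + i < (p ++ q).length := by
        simp only [List.length_append]; omega
      show z (p.length + i) ∈ e (L[i]'hi)
      rw [hmatch _ h1, List.getElem_append_right (by omega)]
      have hidx : p.length + i - p.length = i := by omega
      simp only [hidx]
      exact hget i hi hi'
    have := hbox hmem
    rw [hsect, mem_preimage] at this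
    rwa [hz]
  -- the main density goal
  rw [dense_iff_inter_open]
  intro U hU hUne
  -- initial state from U
  have hInvNil : Inv [] := by
    intro n; rw [sect_nil]; exact hfd n
  obtain ⟨L₀, hL₀⟩ := exists_box he_sub hU hUne
  obtain ⟨q₀, hq₀len, hq₀Inv, hq₀get⟩ := block L₀ [] hInvNil
  have hq₀Inv' : Inv q₀ := by simpa using hq₀Inv
  have hq₀U : ∀ z : ℕ → X, (∀ i (h : i < q₀.length), z i = q₀[i]) → z ∈ U := by
    intro z hz
    refine key U [] q₀ L₀ (by rwa [sect_nil]) hq₀len hq₀get z ?_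
    intro i h
    rw [hz i (by simpa using h)]
    simp
  -- one full step of the recursion
  have stepEx : ∀ (n : ℕ) (p : List X), Inv p →
      ∃ q : List X, p <+: q ∧ p.length < q.length ∧ Inv q ∧
        ∀ z : ℕ → X, (∀ i (h : i < q.length), z i = q[i]) → z ∈ f n := by
    intro n p hp
    have hdo : Dense (sect p (f n)) := hp n
    obtain ⟨L, hL⟩ := exists_box he_sub (sect_open p (f n) (hfo n)) hdo.nonempty
    have hL' : box e (L ++ [0]) ⊆ sect p (f n) := by
      refine subset_trans ?_ hL
      intro z hz i hi
      have h1 : i < (L ++ [0]).length := by simp; omega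
      have := hz i h1
      rwa [List.getElem_append_left hi] at this
    obtain ⟨q, hlen, hInv', hget⟩ := block (L ++ [0]) p hp
    refine ⟨p ++ q, List.prefix_append p q, ?_, hInv', ?_⟩
    · have hq1 : q.length = L.length + 1 := by simpa using hlen
      simp only [List.length_append]
      omega
    · intro z hz
      exact key (f n) p q (L ++ [0]) hL' hlen hget z hz
  -- package states and recurse
  have step' : ∀ (n : ℕ) (s : {p : List X // Inv p}),
      ∃ t : {p : List X // Inv p}, s.1 <+: t.1 ∧ s.1.length < t.1.length ∧
        ∀ z : ℕ → X, (∀ i (h : i < t.1.length), z i = t.1[i]) → z ∈ f n := by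
    intro n s
    obtain ⟨q, h1, h2, h3, h4⟩ := stepEx n s.1 s.2
    exact ⟨⟨q, h3⟩, h1, h2, h4⟩
  choose F hF1 hF2 hF3 using step'
  let P : ℕ → {p : List X // Inv p} := fun n => Nat.rec ⟨q₀, hq₀Inv'⟩ (fun n s => F n s) n
  have hP0 : (P 0).1 = q₀ := rfl
  have hPs : ∀ n, P (n + 1) = F n (P n) := fun n => rfl
  -- basic facts about the chain
  have hlen : ∀ n, n ≤ (P n).1.length := by
    intro n
    induction n with
    | zero => exact Nat.zero_le _
    | succ n ih =>
      have := hF2 n (P n)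
      rw [← hPs n] at this
      omega
  have hpre : ∀ m n, m ≤ n → (P m).1 <+: (P n).1 := by
    intro m n hmn
    induction n, hmn using Nat.le_induction with
    | base => exact List.prefix_refl _
    | succ n hmn ih =>
      refine ih.trans ?_
      have := hF1 n (P n)
      rwa [← hPs n] at this
  -- the limit point
  have hylen : ∀ i : ℕ, i < (P (i + 1)).1.length := fun i =>
    lt_of_lt_of_le (Nat.lt_succ_self i) (hlen (i + 1))
  set y : ℕ → X := fun i => (P (i + 1)).1[i]'(hylen i) with hy
  have hmatch : ∀ n i (h : i < (P n).1.length), y i = (P n).1[i] := by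
    intro n i h
    rcases le_total n (i + 1) with hc | hc
    · have hp := hpre n (i + 1) hc
      exact (hp.getElem h).symm
    · have hp := hpre (i + 1) n hc
      exact hp.getElem (hylen i)
  refine ⟨y, ?_, ?_⟩
  · -- y ∈ U
    exact hq₀U y (fun i h => hmatch 0 i (by rwa [hP0]))
  · -- y ∈ ⋂ n, f n
    rw [mem_iInter]
    intro n
    have h3 := hF3 n (P n)
    rw [← hPs n] at h3
    exact h3 y (fun i h => hmatch (n + 1) i h)
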